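/- Let x ∈ ℂ with Im x > 0. Then the series ∑_{n=1}^∞ n·e^{inx} converges absolutely and −2·∑_{n=1}^∞ n·e^{inx} = 1/(2·sin²(x/2)), where sin is the complex sine function. -/

import Mathlib

open Complex

/-- For `x` in the upper half plane, `∑_{n≥1} n e^{inx}` converges absolutely and
`−2 ∑_{n≥1} n e^{inx} = 1/(2 sin²(x/2))`. (The term `n = 0` vanishes, so the sum is
taken over all `n : ℕ`.) -/
theorem potential_series (x : ℂ) (hx : 0 < x.im) :
    Summable (fun n : ℕ => ‖(n : ℂ) * Complex.exp (Complex.I * n * x)‖)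
    ∧ -2 * ∑' n : ℕ, (n : ℂ) * Complex.exp (Complex.I * n * x)
        = 1 / (2 * Complex.sin (x / 2) ^ 2) := by
  set q : ℂ := Complex.exp (Complex.I * x) with hq
  have hqnorm : ‖q‖ < 1 := by
    rw [hq, Complex.norm_exp]
    have : (Complex.I * x).re = -x.im := by simp
    rw [this]
    exact Real.exp_lt_one_iff.mpr (by linarith)
  have hterm : ∀ n : ℕ, Complex.exp (Complex.I * n * x) = q ^ n := by
    intro n
    rw [hq, ← Complex.exp_nat_mul]
    ring_nf
  have hq0 : q ≠ 0 := Complex.exp_ne_zero _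
  have hq1 : (1 : ℂ) - q ≠ 0 := by
    intro h
    have : q = 1 := by linear_combination -h
    rw [this] at hqnorm; norm_num at hqnorm
  constructor
  · have h1 := summable_norm_pow_mul_geometric_of_norm_lt_one 1 hqnorm
    apply h1.congr
    intro n
    simp [hterm n]
  · have htsum : ∑' n : ℕ, (n : ℂ) * Complex.exp (Complex.I * n * x)
        = q / (1 - q) ^ 2 := by
      rw [show (fun n : ℕ => (n : ℂ) * Complex.exp (Complex.I * n * x))
          = fun n : ℕ => (n : ℂ) * q ^ n from funext fun n => by rw [hterm n]]
      exact tsum_coe_mul_geometric_of_norm_lt_one hqnorm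
    set u : ℂ := Complex.exp (Complex.I * (x / 2)) with hu
    have hu0 : u ≠ 0 := Complex.exp_ne_zero _
    have huq : u * u = q := by
      rw [hu, hq, ← Complex.exp_add]; ring_nf
    have hsin : Complex.sin (x / 2) = (u⁻¹ - u) * Complex.I / 2 := by
      rw [Complex.sin, hu, ← Complex.exp_neg]
      ring_nf
    have hsin2 : Complex.sin (x / 2) ^ 2 = -((1 - q) ^ 2) / (4 * q) := by
      rw [hsin, div_pow, mul_pow, Complex.I_sq, ← huq]
      field_simp
      ring_nf
    rw [htsum, hsin2]
    field_simp
    ring
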